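/- If h ∈ K \ I, then d = d', i.e. the rank of id + c on V equals the rank of the induced map id + c' on V' = V^h / span{h}. -/

import Mathlib

/-- If h ∈ K \ I (with h ≠ 0), then d = d': the rank of id + c on V
equals the rank of the induced map id + c' on V' = V^h / span{h}.
Here V^h = ker (B.flip h) = {x : B(x,h) = 0}, π : V^h → V' is the quotient map
(surjective, with kernel span{h} = {0, h}), and c' is the induced involution. -/
theorem stmt_8
    (V : Type*) [AddCommGroup V] [Module (ZMod 2) V] [FiniteDimensional (ZMod 2) V]
    (B : V →ₗ[ZMod 2] V →ₗ[ZMod 2] ZMod 2)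
    (hBalt : ∀ x, B x x = 0)
    (hBnd : ∀ x, (∀ y, B x y = 0) → x = 0)
    (c : V →ₗ[ZMod 2] V)
    (hc : ∀ x, c (c x) = x)
    (hBc : ∀ x y, B (c x) (c y) = B x y)
    (φ : V →ₗ[ZMod 2] V) (hφ : φ = LinearMap.id + c)
    (h : V) (hh0 : h ≠ 0)
    (hhK : c h = h) (hhI : h ∉ LinearMap.range φ)
    (V' : Type*) [AddCommGroup V'] [Module (ZMod 2) V'] [FiniteDimensional (ZMod 2) V']
    (π : ↥(LinearMap.ker (B.flip h)) →ₗ[ZMod 2] V')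
    (hπsurj : Function.Surjective π)
    (hπker : ∀ x : ↥(LinearMap.ker (B.flip h)), π x = 0 ↔ ((x : V) = 0 ∨ (x : V) = h))
    (hcVh : ∀ x : ↥(LinearMap.ker (B.flip h)), c (x : V) ∈ LinearMap.ker (B.flip h))
    (c' : V' →ₗ[ZMod 2] V')
    (hπc : ∀ x : ↥(LinearMap.ker (B.flip h)), π ⟨c (x : V), hcVh x⟩ = c' (π x)) :
    Module.finrank (ZMod 2) ↥(LinearMap.range φ) =
      Module.finrank (ZMod 2) ↥(LinearMap.range (LinearMap.id + c')) := by
  classical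
  -- char 2 facts
  have hvv : ∀ v : V, v + v = 0 := by
    intro v
    have h2 : (2 : ZMod 2) • v = v + v := two_smul _ v
    have : (2 : ZMod 2) = 0 := by decide
    rw [this, zero_smul] at h2
    exact h2.symm
  have hZ : ∀ a b : ZMod 2, a + b = 0 → a = b := by decide
  have hsymm : ∀ x y, B x y = B y x := by
    intro x y
    have h0 := hBalt (x + y)
    simp only [map_add, LinearMap.add_apply, hBalt] at h0
    apply hZ
    rw [add_zero, zero_add] at h0
    rw [add_comm] at h0
    exact h0
  have hφapp : ∀ x, φ x = x + c x := by
    intro x; rw [hφ]; rfl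
  have hadj : ∀ x y, B (φ x) y = B x (φ y) := by
    intro x y
    have h1 : B (c x) y = B x (c y) := by
      have := hBc x (c y)
      rw [hc] at this
      exact this
    rw [hφapp, hφapp, map_add, LinearMap.add_apply, map_add, h1]
  have hφh : φ h = 0 := by rw [hφapp, hhK]; exact hvv h
  -- I ⊆ V^h
  have hIsub : LinearMap.range φ ≤ LinearMap.ker (B.flip h) := by
    rintro v ⟨y, rfl⟩
    show B.flip h (φ y) = 0
    show B (φ y) h = 0
    rw [hadj, hφh, map_zero]
  -- existence of z ∈ K with B z h = 1
  obtain ⟨f, hf⟩ : ∃ f : Module.Dual (ZMod 2) (V ⧸ LinearMap.range φ),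
      f (Submodule.Quotient.mk h) ≠ 0 := by
    by_contra hcon
    push_neg at hcon
    have h0 : (Submodule.Quotient.mk h : V ⧸ LinearMap.range φ) = 0 :=
      (Module.forall_dual_apply_eq_zero_iff (ZMod 2) _).mp hcon
    exact hhI ((Submodule.Quotient.mk_eq_zero _).mp h0)
  set g : Module.Dual (ZMod 2) V := f ∘ₗ (LinearMap.range φ).mkQ with hg
  have hBinj : Function.Injective (B : V →ₗ[ZMod 2] Module.Dual (ZMod 2) V) := by
    rw [injective_iff_map_eq_zero]
    intro x hx
    exact hBnd x (fun y => by rw [hx]; rfl)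
  have hBsurj : Function.Surjective (B : V →ₗ[ZMod 2] Module.Dual (ZMod 2) V) :=
    (LinearMap.injective_iff_surjective_of_finrank_eq_finrank
      (Subspace.dual_finrank_eq).symm).mp hBinj
  obtain ⟨z, hz⟩ := hBsurj g
  have hzI0 : ∀ x, B z (φ x) = 0 := by
    intro x
    rw [hz, hg]
    show f ((LinearMap.range φ).mkQ (φ x)) = 0
    have : (LinearMap.range φ).mkQ (φ x) = 0 := by
      rw [Submodule.mkQ_apply, Submodule.Quotient.mk_eq_zero]
      exact ⟨x, rfl⟩
    rw [this, map_zero]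
  have hzh : B z h = 1 := by
    have : B z h ≠ 0 := by rw [hz]; exact hf
    revert this
    generalize B z h = a
    revert a; decide
  have hφz : φ z = 0 := by
    apply hBnd
    intro y
    rw [hsymm, ← hadj, hsymm]
    exact hzI0 y
  -- every element of I = φ(V) is φ(y') for some y' ∈ V^h
  have hVhφ : ∀ y : V, ∃ y', B y' h = 0 ∧ φ y' = φ y := by
    intro y
    refine ⟨y + (B y h) • z, ?_, ?_⟩
    · rw [map_add, LinearMap.add_apply, map_smul, LinearMap.smul_apply, hzh]
      generalize B y h = a
      revert a; decide
    · rw [map_add, map_smul, hφz, smul_zero, add_zero]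
  -- the comparison map
  set F : ↥(LinearMap.range φ) →ₗ[ZMod 2] V' := π ∘ₗ Submodule.inclusion hIsub with hF
  have hFapp : ∀ (x : V) (hx : x ∈ LinearMap.range φ),
      F ⟨x, hx⟩ = π ⟨x, hIsub hx⟩ := fun x hx => rfl
  have hFinj : Function.Injective F := by
    rw [injective_iff_map_eq_zero]
    rintro ⟨x, hx⟩ hFx
    rw [hFapp] at hFx
    rcases (hπker _).mp hFx with h0 | hh
    · exact Subtype.ext h0
    · exact absurd (hh ▸ hx) hhI
  have hFrange : LinearMap.range F = LinearMap.range (LinearMap.id + c') := by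
    apply le_antisymm
    · rintro v ⟨⟨i, hi⟩, rfl⟩
      obtain ⟨y, rfl⟩ := hi
      obtain ⟨y', hy'h, hy'φ⟩ := hVhφ y
      have hy'mem : y' ∈ LinearMap.ker (B.flip h) := by
        show B.flip h y' = 0; exact hy'h
      refine ⟨π ⟨y', hy'mem⟩, ?_⟩
      show (LinearMap.id + c' : V' →ₗ[ZMod 2] V') (π ⟨y', hy'mem⟩) = π ⟨φ y, hIsub ⟨y, rfl⟩⟩
      have heq : (⟨φ y, hIsub ⟨y, rfl⟩⟩ : ↥(LinearMap.ker (B.flip h))) =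
          ⟨y', hy'mem⟩ + ⟨c y', hcVh ⟨y', hy'mem⟩⟩ := by
        apply Subtype.ext
        show φ y = y' + c y'
        rw [← hφapp, hy'φ]
      rw [heq, map_add, hπc ⟨y', hy'mem⟩]
      rfl
    · rintro v ⟨u, rfl⟩
      obtain ⟨x, rfl⟩ := hπsurj u
      have hmem : (x : V) + c (x : V) ∈ LinearMap.range φ := ⟨x, (hφapp x)⟩
      refine ⟨⟨(x : V) + c (x : V), hmem⟩, ?_⟩
      rw [hFapp]
      have heq : (⟨(x : V) + c (x : V), hIsub hmem⟩ : ↥(LinearMap.ker (B.flip h))) =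
          x + ⟨c (x : V), hcVh x⟩ := by
        apply Subtype.ext; rfl
      rw [heq, map_add, hπc x]
      rfl
  rw [← LinearMap.finrank_range_of_inj hFinj, hFrange]
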